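/- Stability of sampling for cosine polynomials: let 0 = x_1 < x_2 < ... < x_r = 1, set x_0 = −x_1, x_{r+1} = 2 − x_r, weights w_j = (x_{j+1} − x_{j−1})/2, and δ = max_j (x_{j+1} − x_j). If δ < 1/M, then for every cosine polynomial p of degree at most M, (1−δM)² ‖p‖₂² ≤ Σ_{j=1}^r |p(x_j)|² w_j ≤ (1+δM)² ‖p‖₂², where ‖p‖₂² = ∫_0^1 |p(x)|² dx. -/

import Mathlib

open Real MeasureTheory

open intervalIntegral Set

lemma samp_cosint (m : ℤ) : ∫ t in (0:ℝ)..1, Real.cos (π * m * t) = if m = 0 then 1 else 0 := by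
  by_cases hm : m = 0
  · simp [hm]
  · have h : (π * (m:ℝ)) ≠ 0 := mul_ne_zero Real.pi_ne_zero (Int.cast_ne_zero.2 hm)
    have h2 : ∀ t : ℝ, π * m * t = t * (π * m) := fun t => by ring
    simp only [h2]
    rw [intervalIntegral.integral_comp_mul_right Real.cos h]
    simp only [zero_mul, one_mul, integral_cos, Real.sin_zero, sub_zero, mul_comm π (m:ℝ),
      Real.sin_int_mul_pi, smul_zero, if_neg hm]

lemma samp_cc (x y : ℝ) : Real.cos x * Real.cos y = (Real.cos (x - y) + Real.cos (x + y)) / 2 := by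
  rw [Real.cos_add, Real.cos_sub]; ring

lemma samp_ss (x y : ℝ) : Real.sin x * Real.sin y = (Real.cos (x - y) - Real.cos (x + y)) / 2 := by
  rw [Real.cos_add, Real.cos_sub]; ring

lemma samp_ortho_cc (k l : ℕ) (hk : 1 ≤ k) (hl : 1 ≤ l) :
    ∫ t in (0:ℝ)..1, Real.cos (π * k * t) * Real.cos (π * l * t)
      = if k = l then 1/2 else 0 := by
  have e : ∀ t : ℝ, Real.cos (π * k * t) * Real.cos (π * l * t)
      = (Real.cos (π * ((((k:ℤ) - l) : ℤ) : ℝ) * t) + Real.cos (π * ((((k:ℤ) + l) : ℤ) : ℝ) * t)) / 2 := by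
    intro t
    rw [samp_cc]
    push_cast
    ring_nf
  simp only [e]
  rw [intervalIntegral.integral_div, intervalIntegral.integral_add
    (Continuous.intervalIntegrable (by fun_prop) _ _)
    (Continuous.intervalIntegrable (by fun_prop) _ _),
    samp_cosint, samp_cosint]
  have h1 : ((k:ℤ) + l) ≠ 0 := by positivity
  by_cases hkl : k = l
  · have hl0 : l ≠ 0 := by omega
    simp [hkl, h1, hl0]
  · have : ((k:ℤ) - l) ≠ 0 := sub_ne_zero.2 (by exact_mod_cast hkl)
    simp [this, h1, hkl]

lemma samp_ortho_ss (k l : ℕ) (hk : 1 ≤ k) (hl : 1 ≤ l) :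
    ∫ t in (0:ℝ)..1, Real.sin (π * k * t) * Real.sin (π * l * t)
      = if k = l then 1/2 else 0 := by
  have e : ∀ t : ℝ, Real.sin (π * k * t) * Real.sin (π * l * t)
      = (Real.cos (π * ((((k:ℤ) - l) : ℤ) : ℝ) * t) - Real.cos (π * ((((k:ℤ) + l) : ℤ) : ℝ) * t)) / 2 := by
    intro t
    rw [samp_ss]
    push_cast
    ring_nf
  simp only [e]
  rw [intervalIntegral.integral_div, intervalIntegral.integral_sub
    (Continuous.intervalIntegrable (by fun_prop) _ _)
    (Continuous.intervalIntegrable (by fun_prop) _ _),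
    samp_cosint, samp_cosint]
  have h1 : ((k:ℤ) + l) ≠ 0 := by positivity
  by_cases hkl : k = l
  · have hl0 : l ≠ 0 := by omega
    simp [hkl, h1, hl0]
  · have : ((k:ℤ) - l) ≠ 0 := sub_ne_zero.2 (by exact_mod_cast hkl)
    simp [this, h1, hkl]

lemma samp_cs (f g : ℝ → ℝ) (a b : ℝ) (hab : a ≤ b) (hf : Continuous f) (hg : Continuous g) :
    (∫ t in a..b, f t * g t) ^ 2 ≤ (∫ t in a..b, f t ^ 2) * (∫ t in a..b, g t ^ 2) := by
  set u := ∫ t in a..b, f t ^ 2 with hu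
  set v := ∫ t in a..b, g t ^ 2 with hv
  set w := ∫ t in a..b, f t * g t with hw
  have key : ∀ s : ℝ, 0 ≤ u * (s * s) + (2 * w) * s + v := by
    intro s
    have e : ∀ t : ℝ, (s * f t + g t) ^ 2
        = s ^ 2 * f t ^ 2 + (2 * s) * (f t * g t) + g t ^ 2 := fun t => by ring
    have h0 : (0:ℝ) ≤ ∫ t in a..b, (s * f t + g t) ^ 2 :=
      intervalIntegral.integral_nonneg hab (fun t _ => sq_nonneg _)
    have h1 : (∫ t in a..b, (s * f t + g t) ^ 2)
        = s ^ 2 * u + (2 * s) * w + v := by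
      simp only [e]
      rw [intervalIntegral.integral_add, intervalIntegral.integral_add,
        intervalIntegral.integral_const_mul, intervalIntegral.integral_const_mul]
      · exact ((continuous_const.mul (hf.pow 2)).intervalIntegrable _ _)
      · exact ((continuous_const.mul (hf.mul hg)).intervalIntegrable _ _)
      · exact ((continuous_const.mul (hf.pow 2)).intervalIntegrable _ _).add
          ((continuous_const.mul (hf.mul hg)).intervalIntegrable _ _)
      · exact ((hg.pow 2).intervalIntegrable _ _)
    nlinarith [h0, h1]
  have hd := discrim_le_zero key
  rw [discrim] at hd
  nlinarith [hd]

lemma wirt_ptwise (cst s co F F' : ℝ) (hs : s ≠ 0) (hpy : co ^ 2 = 1 - s ^ 2) :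
    F' ^ 2 - cst ^ 2 * F ^ 2
      = (F' - cst * (co / s) * F) ^ 2
        + cst * ((-cst / s ^ 2) * F ^ 2 + (co / s) * (2 * F * F')) := by
  have h1 : (co / s) ^ 2 = 1 / s ^ 2 - 1 := by
    rw [div_pow, hpy, sub_div, div_self (pow_ne_zero 2 hs)]
  linear_combination (-(cst^2*F^2)) * h1

lemma wirt_G_deriv (f f' : ℝ → ℝ) (hf : ∀ t, HasDerivAt f (f' t) t) (cst a t : ℝ)
    (hsne : Real.sin (cst * (t - a)) ≠ 0) :
    HasDerivAt (fun s => cst * (Real.cos (cst * (s - a)) / Real.sin (cst * (s - a))) * f s ^ 2)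
      (cst * ((-cst / Real.sin (cst * (t - a)) ^ 2) * f t ^ 2
        + (Real.cos (cst * (t - a)) / Real.sin (cst * (t - a))) * (2 * f t * f' t))) t := by
  have hud : HasDerivAt (fun s : ℝ => cst * (s - a)) cst t := by
    simpa using ((hasDerivAt_id t).sub_const a).const_mul cst
  have hcos : HasDerivAt (fun s : ℝ => Real.cos (cst * (s - a)))
      (-Real.sin (cst * (t - a)) * cst) t := hud.cos
  have hsin : HasDerivAt (fun s : ℝ => Real.sin (cst * (s - a)))
      (Real.cos (cst * (t - a)) * cst) t := hud.sin
  have hdiv := hcos.div hsin hsne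
  have hsq : HasDerivAt (fun s : ℝ => f s ^ 2) (2 * f t * f' t) t := by
    have := (hf t).pow 2
    simp at this
    exact this
  have hmul := (hdiv.const_mul cst).mul hsq
  refine hmul.congr_deriv ?_
  simp only [Pi.div_apply]
  have hpy : Real.cos (cst * (t - a)) ^ 2 = 1 - Real.sin (cst * (t - a)) ^ 2 := by
    nlinarith [Real.sin_sq_add_cos_sq (cst * (t - a))]
  set S := Real.sin (cst * (t - a)) with hS
  set CO := Real.cos (cst * (t - a)) with hCO
  linear_combination (-(cst^2 * f t^2 / S^2)) * hpy

lemma wirt_cot_le (v : ℝ) (hv : 0 < v) (hv2 : v ≤ π / 2) :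
    Real.cos v / Real.sin v ≤ 1 / v := by
  have hsin : 0 < Real.sin v := Real.sin_pos_of_pos_of_lt_pi hv (by linarith [Real.pi_pos])
  rcases lt_or_eq_of_le hv2 with h | h
  · have hcos : 0 < Real.cos v := Real.cos_pos_of_mem_Ioo ⟨by linarith, h⟩
    have htan := Real.lt_tan hv h
    rw [Real.tan_eq_sin_div_cos] at htan
    rw [div_le_div_iff₀ hsin hv]
    have := (lt_div_iff₀ hcos).mp htan
    nlinarith
  · rw [h, Real.cos_pi_div_two, zero_div]
    positivity

lemma wirt_part2 (f f' : ℝ → ℝ) (a b K ε cst : ℝ)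
    (hf : ∀ t, HasDerivAt f (f' t) t) (hc : Continuous f') (hK : ∀ t, |f' t| ≤ K)
    (hε : 0 < ε) (hab : a + ε ≤ b) (hcst : 0 < cst) (hub : cst * (b - a) = π / 2)
    (hfb : ∀ t ∈ Icc a b, |f t| ≤ K * (t - a)) :
    -(K ^ 2) * ε ≤ ∫ t in (a+ε)..b, (f' t ^ 2 - cst ^ 2 * f t ^ 2) := by
  have hfc : Continuous f := by
    rw [continuous_iff_continuousAt]; exact fun t => (hf t).continuousAt
  have hposab : a < b := by linarith
  have husin : ∀ t ∈ Icc (a+ε) b, 0 < Real.sin (cst * (t - a)) := by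
    intro t ht
    have h5 : 0 < cst * (t - a) := mul_pos hcst (by linarith [ht.1])
    have h6 : cst * (t - a) ≤ π / 2 := by
      rw [← hub]
      exact mul_le_mul_of_nonneg_left (by linarith [ht.2]) hcst.le
    exact Real.sin_pos_of_pos_of_lt_pi h5 (lt_of_le_of_lt h6 (by linarith [Real.pi_pos]))
  have hGd : ∀ t ∈ uIcc (a+ε) b, HasDerivAt
      (fun s => cst * (Real.cos (cst * (s - a)) / Real.sin (cst * (s - a))) * f s ^ 2)
      (cst * ((-cst / Real.sin (cst * (t - a)) ^ 2) * f t ^ 2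
        + (Real.cos (cst * (t - a)) / Real.sin (cst * (t - a))) * (2 * f t * f' t))) t := by
    intro t ht
    rw [uIcc_of_le hab] at ht
    exact wirt_G_deriv f f' hf cst a t (husin t ht).ne'
  have hsne' : ∀ t ∈ Icc (a+ε) b, Real.sin (cst * (t - a)) ≠ 0 :=
    fun t ht => (husin t ht).ne'
  have hcontsin : Continuous (fun t : ℝ => Real.sin (cst * (t - a))) := by fun_prop
  have hcontcos : Continuous (fun t : ℝ => Real.cos (cst * (t - a))) := by fun_prop
  have hcotc : ContinuousOn
      (fun t : ℝ => Real.cos (cst * (t - a)) / Real.sin (cst * (t - a))) (Icc (a+ε) b) :=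
    hcontcos.continuousOn.div hcontsin.continuousOn hsne'
  have hG'c : ContinuousOn (fun t => cst * ((-cst / Real.sin (cst * (t - a)) ^ 2) * f t ^ 2
        + (Real.cos (cst * (t - a)) / Real.sin (cst * (t - a))) * (2 * f t * f' t)))
      (Icc (a+ε) b) := by
    refine continuousOn_const.mul (ContinuousOn.add ?_ ?_)
    · exact ((continuousOn_const.div ((hcontsin.pow 2).continuousOn)
        (fun t ht => pow_ne_zero 2 (hsne' t ht))).mul ((hfc.pow 2).continuousOn))
    · exact hcotc.mul (by fun_prop)
  have hG'int : IntervalIntegrable (fun t => cst * ((-cst / Real.sin (cst * (t - a)) ^ 2) * f t ^ 2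
        + (Real.cos (cst * (t - a)) / Real.sin (cst * (t - a))) * (2 * f t * f' t)))
      volume (a+ε) b := by
    apply ContinuousOn.intervalIntegrable
    rwa [uIcc_of_le hab]
  have hsqc : ContinuousOn (fun t => (f' t - cst * (Real.cos (cst * (t - a)) /
      Real.sin (cst * (t - a))) * f t) ^ 2) (Icc (a+ε) b) := by
    apply ContinuousOn.pow
    exact hc.continuousOn.sub ((continuousOn_const.mul hcotc).mul hfc.continuousOn)
  have hsqint : IntervalIntegrable (fun t => (f' t - cst * (Real.cos (cst * (t - a)) /
      Real.sin (cst * (t - a))) * f t) ^ 2) volume (a+ε) b := by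
    apply ContinuousOn.intervalIntegrable
    rwa [uIcc_of_le hab]
  have hFTC : (∫ t in (a+ε)..b, cst * ((-cst / Real.sin (cst * (t - a)) ^ 2) * f t ^ 2
        + (Real.cos (cst * (t - a)) / Real.sin (cst * (t - a))) * (2 * f t * f' t)))
      = cst * (Real.cos (cst * (b - a)) / Real.sin (cst * (b - a))) * f b ^ 2
        - cst * (Real.cos (cst * (a + ε - a)) / Real.sin (cst * (a + ε - a))) * f (a+ε) ^ 2 :=
    intervalIntegral.integral_eq_sub_of_hasDerivAt hGd hG'int
  have hsplit : (∫ t in (a+ε)..b, (f' t ^ 2 - cst ^ 2 * f t ^ 2))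
      = (∫ t in (a+ε)..b, (f' t - cst * (Real.cos (cst * (t - a)) /
          Real.sin (cst * (t - a))) * f t) ^ 2)
        + ∫ t in (a+ε)..b, cst * ((-cst / Real.sin (cst * (t - a)) ^ 2) * f t ^ 2
            + (Real.cos (cst * (t - a)) / Real.sin (cst * (t - a))) * (2 * f t * f' t)) := by
    rw [← intervalIntegral.integral_add hsqint hG'int]
    apply intervalIntegral.integral_congr
    intro t ht
    rw [uIcc_of_le hab] at ht
    have hpy : Real.cos (cst * (t - a)) ^ 2 = 1 - Real.sin (cst * (t - a)) ^ 2 := by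
      nlinarith [Real.sin_sq_add_cos_sq (cst * (t - a))]
    exact wirt_ptwise cst _ _ (f t) (f' t) (hsne' t ht) hpy
  have hsqnn : 0 ≤ ∫ t in (a+ε)..b, (f' t - cst * (Real.cos (cst * (t - a)) /
      Real.sin (cst * (t - a))) * f t) ^ 2 :=
    intervalIntegral.integral_nonneg hab (fun t _ => sq_nonneg _)
  have hGb : cst * (Real.cos (cst * (b - a)) / Real.sin (cst * (b - a))) * f b ^ 2 = 0 := by
    rw [hub, Real.cos_pi_div_two]
    simp
  have hGa : cst * (Real.cos (cst * (a + ε - a)) / Real.sin (cst * (a + ε - a))) * f (a+ε) ^ 2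
      ≤ K ^ 2 * ε := by
    have he : a + ε - a = ε := by ring
    rw [he]
    have hv : 0 < cst * ε := by positivity
    have hv2 : cst * ε ≤ π / 2 := by
      rw [← hub]
      exact mul_le_mul_of_nonneg_left (by linarith) hcst.le
    have hcot := wirt_cot_le (cst * ε) hv hv2
    have hsin : 0 < Real.sin (cst * ε) := Real.sin_pos_of_pos_of_lt_pi hv
      (by linarith [Real.pi_pos])
    have hcotnn : 0 ≤ Real.cos (cst * ε) / Real.sin (cst * ε) := by
      apply div_nonneg _ hsin.le
      apply Real.cos_nonneg_of_mem_Icc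
      constructor <;> [linarith; linarith]
    have hfa : |f (a+ε)| ≤ K * ε := by
      have := hfb (a+ε) ⟨by linarith, hab⟩
      simpa [he] using this
    have hK0 : 0 ≤ K * ε := le_trans (abs_nonneg _) hfa
    have hf2 : f (a+ε) ^ 2 ≤ (K * ε) ^ 2 := by
      nlinarith [abs_nonneg (f (a+ε)), sq_abs (f (a+ε))]
    calc cst * (Real.cos (cst * ε) / Real.sin (cst * ε)) * f (a+ε) ^ 2
        ≤ cst * (1 / (cst * ε)) * (K * ε) ^ 2 := by
          apply mul_le_mul
          · exact mul_le_mul_of_nonneg_left hcot hcst.le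
          · exact hf2
          · exact sq_nonneg _
          · positivity
      _ = K ^ 2 * ε := by field_simp
  rw [hsplit, hFTC, hGb]
  linarith [hsqnn, hGa]

lemma samp_eps_arg (E C' L : ℝ) (hL : 0 < L) (hC'0 : 0 ≤ C')
    (key : ∀ ε : ℝ, 0 < ε → ε ≤ L → -C' * ε ≤ E) : 0 ≤ E := by
  by_contra hneg
  push_neg at hneg
  have hd : 0 < -E / (C' + 1) := div_pos (by linarith) (by linarith)
  have hε1 : 0 < min L (-E / (C' + 1)) := lt_min hL hd
  have hε2 := min_le_left L (-E / (C' + 1))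
  have hε3 := min_le_right L (-E / (C' + 1))
  have hkey := key _ hε1 hε2
  rw [le_div_iff₀ (by linarith : (0:ℝ) < C' + 1)] at hε3
  nlinarith [hkey, hε3, hε1, hC'0]

lemma samp_wirt (f f' : ℝ → ℝ) (a b K : ℝ) (hab : a ≤ b)
    (hf : ∀ t, HasDerivAt f (f' t) t) (hc : Continuous f')
    (hK : ∀ t, |f' t| ≤ K) (h0 : f a = 0) :
    ∫ t in a..b, f t ^ 2 ≤ (2 * (b - a) / π) ^ 2 * ∫ t in a..b, f' t ^ 2 := by
  have hfc : Continuous f := by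
    rw [continuous_iff_continuousAt]; exact fun t => (hf t).continuousAt
  rcases eq_or_lt_of_le hab with rfl | hlt
  · simp
  have hK0 : 0 ≤ K := le_trans (abs_nonneg _) (hK a)
  have hLpos : 0 < b - a := by linarith
  have hcstpos : 0 < π / (2 * (b - a)) := by positivity
  have hub : (π / (2 * (b - a))) * (b - a) = π / 2 := by field_simp
  -- pointwise bound on |f|
  have hfb : ∀ t ∈ Icc a b, |f t| ≤ K * (t - a) := by
    intro t ht
    have := (convex_univ : Convex ℝ (Set.univ : Set ℝ)).norm_image_sub_le_of_norm_hasDerivWithin_le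
      (f' := f') (fun s _ => (hf s).hasDerivWithinAt) (fun s _ => by simpa using hK s)
      (mem_univ a) (mem_univ t)
    rw [h0, sub_zero] at this
    simpa [abs_of_nonneg (sub_nonneg.2 ht.1)] using this
  have hgc : Continuous (fun t => f' t ^ 2 - (π / (2 * (b - a))) ^ 2 * f t ^ 2) := by fun_prop
  have key : ∀ ε : ℝ, 0 < ε → ε ≤ b - a →
      -((K ^ 2 + (π / (2 * (b - a))) ^ 2 * (K * (b - a)) ^ 2) + K ^ 2) * ε
        ≤ ∫ t in a..b, (f' t ^ 2 - (π / (2 * (b - a))) ^ 2 * f t ^ 2) := by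
    intro ε hε hεL
    have ha'b : a + ε ≤ b := by linarith
    have haa' : a ≤ a + ε := by linarith
    have hsplit : (∫ t in a..b, (f' t ^ 2 - (π / (2 * (b - a))) ^ 2 * f t ^ 2))
        = (∫ t in a..(a+ε), (f' t ^ 2 - (π / (2 * (b - a))) ^ 2 * f t ^ 2))
          + ∫ t in (a+ε)..b, (f' t ^ 2 - (π / (2 * (b - a))) ^ 2 * f t ^ 2) :=
      (integral_add_adjacent_intervals (hgc.intervalIntegrable _ _)
        (hgc.intervalIntegrable _ _)).symm
    have h1 : |∫ t in a..(a+ε), (f' t ^ 2 - (π / (2 * (b - a))) ^ 2 * f t ^ 2)|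
        ≤ (K ^ 2 + (π / (2 * (b - a))) ^ 2 * (K * (b - a)) ^ 2) * ε := by
      have hb : ∀ s ∈ uIoc a (a+ε), ‖f' s ^ 2 - (π / (2 * (b - a))) ^ 2 * f s ^ 2‖
          ≤ K ^ 2 + (π / (2 * (b - a))) ^ 2 * (K * (b - a)) ^ 2 := by
        intro s hs
        rw [uIoc_of_le haa'] at hs
        have hs1 : a ≤ s := le_of_lt hs.1
        have hs2 : s ≤ b := le_trans hs.2 ha'b
        have hfs : |f s| ≤ K * (b - a) := by
          have h7 := hfb s ⟨hs1, hs2⟩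
          have h8 : K * (s - a) ≤ K * (b - a) :=
            mul_le_mul_of_nonneg_left (by linarith) hK0
          linarith
        have h3 : f s ^ 2 ≤ (K * (b - a)) ^ 2 := by
          nlinarith [abs_nonneg (f s), sq_abs (f s)]
        have h4 : f' s ^ 2 ≤ K ^ 2 := by
          nlinarith [hK s, abs_nonneg (f' s), sq_abs (f' s)]
        have h5 : (0:ℝ) ≤ (π / (2 * (b - a))) ^ 2 := sq_nonneg _
        rw [Real.norm_eq_abs, abs_le]
        constructor <;> nlinarith [sq_nonneg (f s), sq_nonneg (f' s)]
      have h6 := intervalIntegral.norm_integral_le_of_norm_le_const hb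
      rw [show a + ε - a = ε by ring, abs_of_nonneg hε.le] at h6
      simpa using h6
    have h2 := wirt_part2 f f' a b K ε (π / (2 * (b - a))) hf hc hK hε ha'b hcstpos hub hfb
    rw [hsplit]
    have h9 := neg_abs_le (∫ t in a..(a+ε), (f' t ^ 2 - (π / (2 * (b - a))) ^ 2 * f t ^ 2))
    nlinarith [h1, h2, h9]
  have hE0 : 0 ≤ ∫ t in a..b, (f' t ^ 2 - (π / (2 * (b - a))) ^ 2 * f t ^ 2) :=
    samp_eps_arg _ _ _ hLpos (by positivity) key
  have hEeq : (∫ t in a..b, (f' t ^ 2 - (π / (2 * (b - a))) ^ 2 * f t ^ 2))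
      = (∫ t in a..b, f' t ^ 2) - (π / (2 * (b - a))) ^ 2 * ∫ t in a..b, f t ^ 2 := by
    rw [intervalIntegral.integral_sub (f := fun t => f' t ^ 2)
      (g := fun t => (π / (2 * (b - a))) ^ 2 * f t ^ 2) ((hc.pow 2).intervalIntegrable _ _)
      ((continuous_const.mul (hfc.pow 2)).intervalIntegrable _ _),
      intervalIntegral.integral_const_mul]
  rw [hEeq] at hE0
  have hid : (2 * (b - a) / π) ^ 2 * (π / (2 * (b - a))) ^ 2 = 1 := by
    rw [div_pow, div_pow]
    rw [div_mul_div_comm]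
    rw [div_eq_one_iff_eq (by positivity)]
    ring
  have h9 : (π / (2 * (b - a))) ^ 2 * (∫ t in a..b, f t ^ 2) ≤ ∫ t in a..b, f' t ^ 2 := by
    linarith
  have h10 := mul_le_mul_of_nonneg_left h9 (by positivity : (0:ℝ) ≤ (2 * (b - a) / π) ^ 2)
  calc ∫ t in a..b, f t ^ 2
      = (2 * (b - a) / π) ^ 2 * ((π / (2 * (b - a))) ^ 2 * ∫ t in a..b, f t ^ 2) := by
        rw [← mul_assoc, hid, one_mul]
    _ ≤ (2 * (b - a) / π) ^ 2 * ∫ t in a..b, f' t ^ 2 := h10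

lemma samp_wirt' (f f' : ℝ → ℝ) (a b K : ℝ) (hab : a ≤ b)
    (hf : ∀ t, HasDerivAt f (f' t) t) (hc : Continuous f')
    (hK : ∀ t, |f' t| ≤ K) (h0 : f b = 0) :
    ∫ t in a..b, f t ^ 2 ≤ (2 * (b - a) / π) ^ 2 * ∫ t in a..b, f' t ^ 2 := by
  have hg : ∀ t, HasDerivAt (fun s => f (a + b - s)) (-f' (a + b - t)) t := by
    intro t
    have hinner : HasDerivAt (fun s : ℝ => a + b - s) (-1) t := by
      simpa using (hasDerivAt_id t).const_sub (a + b)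
    have := (hf (a + b - t)).comp t hinner
    simp at this
    exact this
  have hgc : Continuous (fun t => -f' (a + b - t)) := by fun_prop
  have hga : f (a + b - a) = 0 := by rw [show a + b - a = b by ring]; exact h0
  have hK' : ∀ t, |(-f' (a + b - t))| ≤ K := fun t => by rw [abs_neg]; exact hK _
  have h := samp_wirt (fun s => f (a + b - s)) (fun t => -f' (a + b - t)) a b K hab
    hg hgc hK' hga
  have e1 : (∫ t in a..b, f (a + b - t) ^ 2) = ∫ t in a..b, f t ^ 2 := by
    have := intervalIntegral.integral_comp_sub_left (a := a) (b := b)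
      (fun t => f t ^ 2) (a + b)
    simpa [show a + b - b = a by ring, show a + b - a = b by ring] using this
  have e2 : (∫ t in a..b, (-f' (a + b - t)) ^ 2) = ∫ t in a..b, f' t ^ 2 := by
    have := intervalIntegral.integral_comp_sub_left (a := a) (b := b)
      (fun t => f' t ^ 2) (a + b)
    simp only [neg_sq]
    simpa [show a + b - b = a by ring, show a + b - a = b by ring] using this
  rw [e1, e2] at h
  exact h

lemma samp_cosint_nat (k : ℕ) (hk : k ≠ 0) :
    ∫ t in (0:ℝ)..1, Real.cos (π * k * t) = 0 := by
  have h := samp_cosint (k : ℤ)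
  have hk' : (k : ℤ) ≠ 0 := by exact_mod_cast hk
  rw [if_neg hk'] at h
  push_cast at h
  exact h

lemma samp_deriv (M : ℕ) (c : ℕ → ℝ) (t : ℝ) :
    HasDerivAt (fun t => c 0 / Real.sqrt 2 + ∑ k ∈ Finset.Icc 1 M, c k * Real.cos (π * k * t))
      (∑ k ∈ Finset.Icc 1 M, c k * (-Real.sin (π * k * t) * (π * k))) t := by
  apply HasDerivAt.const_add
  apply HasDerivAt.fun_sum
  intro k _
  have hu : HasDerivAt (fun t : ℝ => π * k * t) (π * k) t := by
    simpa using (hasDerivAt_id t).const_mul (π * (k:ℝ))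
  exact hu.cos.const_mul (c k)

lemma samp_A (M : ℕ) (c : ℕ → ℝ) :
    ∫ t in (0:ℝ)..1, (c 0 / Real.sqrt 2 + ∑ k ∈ Finset.Icc 1 M, c k * Real.cos (π * k * t)) ^ 2
      = (c 0) ^ 2 / 2 + (1/2) * ∑ k ∈ Finset.Icc 1 M, (c k) ^ 2 := by
  have hsq2 : (c 0 / Real.sqrt 2) ^ 2 = (c 0) ^ 2 / 2 := by
    rw [div_pow, Real.sq_sqrt (by norm_num : (0:ℝ) ≤ 2)]
  have e : ∀ t : ℝ, (c 0 / Real.sqrt 2 + ∑ k ∈ Finset.Icc 1 M, c k * Real.cos (π * k * t)) ^ 2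
      = (c 0) ^ 2 / 2
        + ((2 * (c 0 / Real.sqrt 2)) * (∑ k ∈ Finset.Icc 1 M, c k * Real.cos (π * k * t))
        + ∑ k ∈ Finset.Icc 1 M, ∑ l ∈ Finset.Icc 1 M,
            (c k * c l) * (Real.cos (π * k * t) * Real.cos (π * l * t))) := by
    intro t
    have hS : (∑ k ∈ Finset.Icc 1 M, c k * Real.cos (π * k * t)) ^ 2
        = ∑ k ∈ Finset.Icc 1 M, ∑ l ∈ Finset.Icc 1 M,
            (c k * c l) * (Real.cos (π * k * t) * Real.cos (π * l * t)) := by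
      rw [sq, Finset.sum_mul_sum]
      refine Finset.sum_congr rfl (fun k _ => Finset.sum_congr rfl (fun l _ => by ring))
    rw [add_sq, hsq2, hS, add_assoc]
  simp only [e]
  rw [intervalIntegral.integral_add (by apply Continuous.intervalIntegrable; fun_prop)
      (by apply Continuous.intervalIntegrable; fun_prop),
    intervalIntegral.integral_add (by apply Continuous.intervalIntegrable; fun_prop)
      (by apply Continuous.intervalIntegrable; fun_prop),
    intervalIntegral.integral_const]
  have h2 : (∫ t in (0:ℝ)..1, (2 * (c 0 / Real.sqrt 2))
      * (∑ k ∈ Finset.Icc 1 M, c k * Real.cos (π * k * t))) = 0 := by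
    rw [intervalIntegral.integral_const_mul]
    rw [intervalIntegral.integral_finset_sum
      (fun k _ => by apply Continuous.intervalIntegrable; fun_prop)]
    have : ∀ k ∈ Finset.Icc 1 M, (∫ t in (0:ℝ)..1, c k * Real.cos (π * k * t)) = 0 := by
      intro k hk
      rw [intervalIntegral.integral_const_mul,
        samp_cosint_nat k (by have := (Finset.mem_Icc.mp hk).1; omega), mul_zero]
    rw [Finset.sum_congr rfl this, Finset.sum_const_zero, mul_zero]
  have h3 : (∫ t in (0:ℝ)..1, ∑ k ∈ Finset.Icc 1 M, ∑ l ∈ Finset.Icc 1 M,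
        (c k * c l) * (Real.cos (π * k * t) * Real.cos (π * l * t)))
      = (1/2) * ∑ k ∈ Finset.Icc 1 M, (c k) ^ 2 := by
    rw [intervalIntegral.integral_finset_sum (fun k _ => by
      apply Continuous.intervalIntegrable
      apply continuous_finset_sum
      intro l _
      fun_prop)]
    have hout : ∀ k ∈ Finset.Icc 1 M, (∫ t in (0:ℝ)..1, ∑ l ∈ Finset.Icc 1 M,
          (c k * c l) * (Real.cos (π * k * t) * Real.cos (π * l * t)))
        = (c k) ^ 2 / 2 := by
      intro k hk
      rw [intervalIntegral.integral_finset_sum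
        (fun l _ => by apply Continuous.intervalIntegrable; fun_prop)]
      have hin : ∀ l ∈ Finset.Icc 1 M, (∫ t in (0:ℝ)..1,
            (c k * c l) * (Real.cos (π * k * t) * Real.cos (π * l * t)))
          = if k = l then (c k) ^ 2 / 2 else 0 := by
        intro l hl
        rw [intervalIntegral.integral_const_mul,
          samp_ortho_cc k l (Finset.mem_Icc.mp hk).1 (Finset.mem_Icc.mp hl).1]
        by_cases hkl : k = l
        · subst hkl; simp; ring
        · simp [hkl]
      rw [Finset.sum_congr rfl hin, Finset.sum_ite_eq (Finset.Icc 1 M) k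
        (fun l => (c k) ^ 2 / 2), if_pos hk]
    rw [Finset.sum_congr rfl hout, Finset.mul_sum]
    exact Finset.sum_congr rfl (fun k _ => by ring)
  rw [h2, h3]
  simp

lemma samp_B (M : ℕ) (c : ℕ → ℝ) :
    ∫ t in (0:ℝ)..1, (∑ k ∈ Finset.Icc 1 M, c k * (-Real.sin (π * k * t) * (π * k))) ^ 2
      = (1/2) * ∑ k ∈ Finset.Icc 1 M, (π * k * c k) ^ 2 := by
  have e : ∀ t : ℝ, (∑ k ∈ Finset.Icc 1 M, c k * (-Real.sin (π * k * t) * (π * k))) ^ 2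
      = ∑ k ∈ Finset.Icc 1 M, ∑ l ∈ Finset.Icc 1 M,
          ((π * k * c k) * (π * l * c l)) * (Real.sin (π * k * t) * Real.sin (π * l * t)) := by
    intro t
    rw [sq, Finset.sum_mul_sum]
    refine Finset.sum_congr rfl (fun k _ => Finset.sum_congr rfl (fun l _ => by ring))
  simp only [e]
  rw [intervalIntegral.integral_finset_sum (fun k _ => by
    apply Continuous.intervalIntegrable
    apply continuous_finset_sum
    intro l _
    fun_prop)]
  have hout : ∀ k ∈ Finset.Icc 1 M, (∫ t in (0:ℝ)..1, ∑ l ∈ Finset.Icc 1 M,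
        ((π * k * c k) * (π * l * c l)) * (Real.sin (π * k * t) * Real.sin (π * l * t)))
      = (π * k * c k) ^ 2 / 2 := by
    intro k hk
    rw [intervalIntegral.integral_finset_sum
      (fun l _ => by apply Continuous.intervalIntegrable; fun_prop)]
    have hin : ∀ l ∈ Finset.Icc 1 M, (∫ t in (0:ℝ)..1,
          ((π * k * c k) * (π * l * c l)) * (Real.sin (π * k * t) * Real.sin (π * l * t)))
        = if k = l then (π * k * c k) ^ 2 / 2 else 0 := by
      intro l hl
      rw [intervalIntegral.integral_const_mul,
        samp_ortho_ss k l (Finset.mem_Icc.mp hk).1 (Finset.mem_Icc.mp hl).1]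
      by_cases hkl : k = l
      · subst hkl; simp; ring
      · simp [hkl]
    rw [Finset.sum_congr rfl hin, Finset.sum_ite_eq (Finset.Icc 1 M) k
      (fun l => (π * k * c k) ^ 2 / 2), if_pos hk]
  rw [Finset.sum_congr rfl hout, Finset.mul_sum]
  exact Finset.sum_congr rfl (fun k _ => by ring)

lemma samp_final (Asum Isum Dsum sA sD d : ℝ)
    (hd0 : 0 ≤ d) (hd1 : d < 1)
    (hsA2 : sA ^ 2 = Asum) (hsD2 : sD ^ 2 = Dsum)
    (hsAnn : 0 ≤ sA) (hsDnn : 0 ≤ sD)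
    (hsDle : sD ≤ d * sA)
    (hIlo : -(sA * sD) ≤ Isum) (hIhi : Isum ≤ sA * sD) :
    (1 - d) ^ 2 * Asum ≤ Asum - 2 * Isum + Dsum
      ∧ Asum - 2 * Isum + Dsum ≤ (1 + d) ^ 2 * Asum := by
  constructor
  · have h1 : 0 ≤ d * sA - sD := by linarith
    have h2 : 0 ≤ (2 - d) * sA - sD := by nlinarith
    nlinarith [mul_nonneg h1 h2, hIhi]
  · have h3 : 0 ≤ (1 + d) * sA - (sA + sD) := by linarith
    have h4 : 0 ≤ (1 + d) * sA + (sA + sD) := by nlinarith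
    nlinarith [mul_nonneg h3 h4, hIlo]

lemma samp_main (P Q : ℝ → ℝ) (K ν : ℝ) (r : ℕ) (x w : ℕ → ℝ) (δ : ℝ)
    (hderiv : ∀ t, HasDerivAt P (Q t) t) (hQc : Continuous Q) (hQK : ∀ t, |Q t| ≤ K)
    (hν0 : 0 ≤ ν) (hδ0 : 0 ≤ δ) (hδν : δ * ν < 1)
    (hB : ∫ t in (0:ℝ)..1, Q t ^ 2 ≤ (π * ν) ^ 2 * ∫ t in (0:ℝ)..1, P t ^ 2)
    (hr : 2 ≤ r)
    (hmono : ∀ j, 1 ≤ j → j < r → x j < x (j + 1))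
    (hx1 : x 1 = 0) (hxr : x r = 1) (hx0 : x 0 = 0) (hxr1 : x (r + 1) = 1)
    (hw : ∀ j, 1 ≤ j → j ≤ r → w j = (x (j + 1) - x (j - 1)) / 2)
    (hδ : ∀ j ≤ r, x (j + 1) - x j ≤ δ) :
    (1 - δ * ν) ^ 2 * (∫ t in (0:ℝ)..1, P t ^ 2)
        ≤ ∑ j ∈ Finset.Icc 1 r, P (x j) ^ 2 * w j
      ∧ ∑ j ∈ Finset.Icc 1 r, P (x j) ^ 2 * w j
        ≤ (1 + δ * ν) ^ 2 * ∫ t in (0:ℝ)..1, P t ^ 2 := by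
  have hPc : Continuous P := continuous_iff_continuousAt.2 (fun t => (hderiv t).continuousAt)
  set y : ℕ → ℝ := fun j => (x j + x (j + 1)) / 2 with hy
  have hy0 : y 0 = 0 := by simp [hy, hx0, hx1]
  have hyr : y r = 1 := by simp [hy, hxr, hxr1]
  have hgeo : ∀ j ∈ Finset.Icc 1 r, y (j - 1) ≤ x j ∧ x j ≤ y j ∧
      x j - y (j - 1) ≤ δ / 2 ∧ y j - x j ≤ δ / 2 ∧ w j = y j - y (j - 1) := by
    intro j hj
    obtain ⟨h1, h2⟩ := Finset.mem_Icc.mp hj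
    have hsub : j - 1 + 1 = j := Nat.succ_pred_eq_of_pos h1
    have hyj1 : y (j - 1) = (x (j - 1) + x j) / 2 := by
      simp only [hy]; rw [hsub]
    have hyj : y j = (x j + x (j + 1)) / 2 := by simp only [hy]
    have hxmono1 : x (j - 1) ≤ x j := by
      rcases eq_or_lt_of_le h1 with h | h
      · rw [← h]; simp [hx0, hx1]
      · have := hmono (j - 1) (by omega) (by omega)
        rw [hsub] at this; linarith
    have hxmono2 : x j ≤ x (j + 1) := by
      rcases eq_or_lt_of_le h2 with h | h
      · rw [h, hxr1, hxr]
      · exact (hmono j h1 h).le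
    have hd1 : x j - x (j - 1) ≤ δ := by
      have := hδ (j - 1) (by omega); rwa [hsub] at this
    have hd2 : x (j + 1) - x j ≤ δ := hδ j h2
    refine ⟨?_, ?_, ?_, ?_, ?_⟩
    · rw [hyj1]; linarith
    · rw [hyj]; linarith
    · rw [hyj1]; linarith
    · rw [hyj]; linarith
    · rw [hw j h1 h2, hyj1, hyj]; ring
  have hymono : ∀ j ∈ Finset.Icc 1 r, y (j - 1) ≤ y j :=
    fun j hj => le_trans (hgeo j hj).1 (hgeo j hj).2.1
  -- cell quantities
  set A := ∫ t in (0:ℝ)..1, P t ^ 2 with hA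
  set Aj : ℕ → ℝ := fun j => ∫ t in y (j - 1)..y j, P t ^ 2 with hAj
  set Dj : ℕ → ℝ := fun j => ∫ t in y (j - 1)..y j, (P t - P (x j)) ^ 2 with hDj
  set Ij : ℕ → ℝ := fun j => ∫ t in y (j - 1)..y j, P t * (P t - P (x j)) with hIj
  set Bj : ℕ → ℝ := fun j => ∫ t in y (j - 1)..y j, Q t ^ 2 with hBj
  have enat : ∀ i : ℕ, 1 + i - 1 = i := fun i => by omega
  have enat2 : ∀ i : ℕ, 1 + i = i + 1 := fun i => by omega
  have hAsum : ∑ j ∈ Finset.Icc 1 r, Aj j = A := by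
    simp only [hAj, hA]
    rw [← Finset.Ico_add_one_right_eq_Icc, Finset.sum_Ico_eq_sum_range]
    simp only [Nat.add_sub_cancel, Nat.succ_sub_one, enat, enat2]
    rw [intervalIntegral.sum_integral_adjacent_intervals (f := fun t => P t ^ 2)
      (fun k _ => (hPc.pow 2).intervalIntegrable _ _)]
    rw [hy0, hyr]
  have hBsum : ∑ j ∈ Finset.Icc 1 r, Bj j = ∫ t in (0:ℝ)..1, Q t ^ 2 := by
    simp only [hBj]
    rw [← Finset.Ico_add_one_right_eq_Icc, Finset.sum_Ico_eq_sum_range]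
    simp only [Nat.add_sub_cancel, Nat.succ_sub_one, enat, enat2]
    rw [intervalIntegral.sum_integral_adjacent_intervals (f := fun t => Q t ^ 2)
      (fun k _ => (hQc.pow 2).intervalIntegrable _ _)]
    rw [hy0, hyr]
  have hcell : ∀ j ∈ Finset.Icc 1 r, P (x j) ^ 2 * w j = Aj j - 2 * Ij j + Dj j := by
    intro j hj
    have hwj := (hgeo j hj).2.2.2.2
    have hconst : P (x j) ^ 2 * w j = ∫ t in y (j - 1)..y j, P (x j) ^ 2 := by
      rw [intervalIntegral.integral_const, hwj, smul_eq_mul]; ring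
    rw [hconst]
    have e : ∀ t : ℝ, P (x j) ^ 2
        = P t ^ 2 - 2 * (P t * (P t - P (x j))) + (P t - P (x j)) ^ 2 := fun t => by ring
    rw [intervalIntegral.integral_congr (fun t _ => e t)]
    rw [intervalIntegral.integral_add (f := fun t => P t ^ 2 - 2 * (P t * (P t - P (x j))))
        (g := fun t => (P t - P (x j)) ^ 2) (IntervalIntegrable.sub
        ((hPc.pow 2).intervalIntegrable _ _)
        ((continuous_const.mul (hPc.mul (hPc.sub continuous_const))).intervalIntegrable _ _))
      (((hPc.sub continuous_const).pow 2).intervalIntegrable _ _),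
      intervalIntegral.integral_sub (f := fun t => P t ^ 2)
        (g := fun t => 2 * (P t * (P t - P (x j)))) ((hPc.pow 2).intervalIntegrable _ _)
        ((continuous_const.mul (hPc.mul (hPc.sub continuous_const))).intervalIntegrable _ _),
      intervalIntegral.integral_const_mul]
  have hCS : ∀ j ∈ Finset.Icc 1 r, Ij j ^ 2 ≤ Aj j * Dj j := by
    intro j hj
    simp only [hAj, hDj, hIj]
    exact samp_cs P (fun t => P t - P (x j)) _ _ (hymono j hj) hPc (hPc.sub continuous_const)
  have hDle : ∀ j ∈ Finset.Icc 1 r, Dj j ≤ (δ / π) ^ 2 * Bj j := by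
    intro j hj
    obtain ⟨hg1, hg2, hg3, hg4, -⟩ := hgeo j hj
    have hf : ∀ t, HasDerivAt (fun t => P t - P (x j)) (Q t) t :=
      fun t => (hderiv t).sub_const _
    have hQint : ∀ u v : ℝ, IntervalIntegrable (fun t => Q t ^ 2) volume u v :=
      fun u v => (hQc.pow 2).intervalIntegrable _ _
    have hPint : ∀ u v : ℝ, IntervalIntegrable (fun t => (P t - P (x j)) ^ 2) volume u v :=
      fun u v => (((hPc.sub continuous_const).pow 2)).intervalIntegrable _ _
    have hleft : (∫ t in y (j - 1)..x j, (P t - P (x j)) ^ 2)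
        ≤ (δ / π) ^ 2 * ∫ t in y (j - 1)..x j, Q t ^ 2 := by
      have h := samp_wirt' (fun t => P t - P (x j)) Q (y (j - 1)) (x j) K hg1 hf hQc hQK
        (by simp)
      have hc2 : (2 * (x j - y (j - 1)) / π) ^ 2 ≤ (δ / π) ^ 2 := by
        rw [div_pow, div_pow]
        apply div_le_div_of_nonneg_right ?_ (by positivity)
        · nlinarith [hg1, hg3]
      have hqnn : 0 ≤ ∫ t in y (j - 1)..x j, Q t ^ 2 :=
        intervalIntegral.integral_nonneg hg1 (fun t _ => sq_nonneg _)
      calc (∫ t in y (j - 1)..x j, (P t - P (x j)) ^ 2)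
          ≤ (2 * (x j - y (j - 1)) / π) ^ 2 * ∫ t in y (j - 1)..x j, Q t ^ 2 := h
        _ ≤ (δ / π) ^ 2 * ∫ t in y (j - 1)..x j, Q t ^ 2 :=
            mul_le_mul_of_nonneg_right hc2 hqnn
    have hright : (∫ t in x j..y j, (P t - P (x j)) ^ 2)
        ≤ (δ / π) ^ 2 * ∫ t in x j..y j, Q t ^ 2 := by
      have h := samp_wirt (fun t => P t - P (x j)) Q (x j) (y j) K hg2 hf hQc hQK
        (by simp)
      have hc2 : (2 * (y j - x j) / π) ^ 2 ≤ (δ / π) ^ 2 := by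
        rw [div_pow, div_pow]
        apply div_le_div_of_nonneg_right ?_ (by positivity)
        · nlinarith [hg2, hg4]
      have hqnn : 0 ≤ ∫ t in x j..y j, Q t ^ 2 :=
        intervalIntegral.integral_nonneg hg2 (fun t _ => sq_nonneg _)
      calc (∫ t in x j..y j, (P t - P (x j)) ^ 2)
          ≤ (2 * (y j - x j) / π) ^ 2 * ∫ t in x j..y j, Q t ^ 2 := h
        _ ≤ (δ / π) ^ 2 * ∫ t in x j..y j, Q t ^ 2 := mul_le_mul_of_nonneg_right hc2 hqnn
    have hDsplit : Dj j = (∫ t in y (j - 1)..x j, (P t - P (x j)) ^ 2)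
        + ∫ t in x j..y j, (P t - P (x j)) ^ 2 := by
      simp only [hDj]
      rw [intervalIntegral.integral_add_adjacent_intervals (hPint _ _) (hPint _ _)]
    have hBsplit : Bj j = (∫ t in y (j - 1)..x j, Q t ^ 2) + ∫ t in x j..y j, Q t ^ 2 := by
      simp only [hBj]
      rw [intervalIntegral.integral_add_adjacent_intervals (hQint _ _) (hQint _ _)]
    rw [hDsplit, hBsplit, mul_add]
    exact add_le_add hleft hright
  -- sums
  have hSsum : ∑ j ∈ Finset.Icc 1 r, P (x j) ^ 2 * w j
      = (∑ j ∈ Finset.Icc 1 r, Aj j) - 2 * (∑ j ∈ Finset.Icc 1 r, Ij j)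
        + ∑ j ∈ Finset.Icc 1 r, Dj j := by
    rw [Finset.sum_congr rfl hcell, Finset.sum_add_distrib, Finset.sum_sub_distrib,
      ← Finset.mul_sum]
  have hAjnn : ∀ j ∈ Finset.Icc 1 r, 0 ≤ Aj j := fun j hj =>
    intervalIntegral.integral_nonneg (hymono j hj) (fun t _ => sq_nonneg _)
  have hDjnn : ∀ j ∈ Finset.Icc 1 r, 0 ≤ Dj j := fun j hj =>
    intervalIntegral.integral_nonneg (hymono j hj) (fun t _ => sq_nonneg _)
  have hAnn : 0 ≤ A := intervalIntegral.integral_nonneg zero_le_one (fun t _ => sq_nonneg _)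
  have hDnn : 0 ≤ ∑ j ∈ Finset.Icc 1 r, Dj j := Finset.sum_nonneg hDjnn
  have hDfin : ∑ j ∈ Finset.Icc 1 r, Dj j ≤ (δ * ν) ^ 2 * A := by
    have h1 : ∑ j ∈ Finset.Icc 1 r, Dj j ≤ ∑ j ∈ Finset.Icc 1 r, (δ / π) ^ 2 * Bj j :=
      Finset.sum_le_sum hDle
    rw [← Finset.mul_sum, hBsum] at h1
    have h2 : (δ / π) ^ 2 * (∫ t in (0:ℝ)..1, Q t ^ 2) ≤ (δ / π) ^ 2 * ((π * ν) ^ 2 * A) :=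
      mul_le_mul_of_nonneg_left hB (sq_nonneg _)
    have h3 : (δ / π) ^ 2 * ((π * ν) ^ 2 * A) = (δ * ν) ^ 2 * A := by
      field_simp
    linarith
  -- Cauchy-Schwarz for the sum
  have hIabs : |∑ j ∈ Finset.Icc 1 r, Ij j|
      ≤ ∑ j ∈ Finset.Icc 1 r, Real.sqrt (Aj j) * Real.sqrt (Dj j) := by
    refine (Finset.abs_sum_le_sum_abs _ _).trans (Finset.sum_le_sum ?_)
    intro j hj
    have h1 : |Ij j| = Real.sqrt (Ij j ^ 2) := (Real.sqrt_sq_eq_abs _).symm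
    rw [h1, ← Real.sqrt_mul (hAjnn j hj)]
    exact Real.sqrt_le_sqrt (hCS j hj)
  have hT2 : (∑ j ∈ Finset.Icc 1 r, Real.sqrt (Aj j) * Real.sqrt (Dj j)) ^ 2
      ≤ A * ∑ j ∈ Finset.Icc 1 r, Dj j := by
    have := Finset.sum_mul_sq_le_sq_mul_sq (Finset.Icc 1 r)
      (fun j => Real.sqrt (Aj j)) (fun j => Real.sqrt (Dj j))
    have e1 : ∑ j ∈ Finset.Icc 1 r, Real.sqrt (Aj j) ^ 2 = A := by
      rw [← hAsum]
      exact Finset.sum_congr rfl (fun j hj => Real.sq_sqrt (hAjnn j hj))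
    have e2 : ∑ j ∈ Finset.Icc 1 r, Real.sqrt (Dj j) ^ 2 = ∑ j ∈ Finset.Icc 1 r, Dj j :=
      Finset.sum_congr rfl (fun j hj => Real.sq_sqrt (hDjnn j hj))
    rw [e1, e2] at this
    exact this
  have hTnn : 0 ≤ ∑ j ∈ Finset.Icc 1 r, Real.sqrt (Aj j) * Real.sqrt (Dj j) :=
    Finset.sum_nonneg (fun j _ => mul_nonneg (Real.sqrt_nonneg _) (Real.sqrt_nonneg _))
  have hT : ∑ j ∈ Finset.Icc 1 r, Real.sqrt (Aj j) * Real.sqrt (Dj j)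
      ≤ Real.sqrt A * Real.sqrt (∑ j ∈ Finset.Icc 1 r, Dj j) := by
    rw [← Real.sqrt_mul hAnn]
    rw [show ∑ j ∈ Finset.Icc 1 r, Real.sqrt (Aj j) * Real.sqrt (Dj j)
      = Real.sqrt ((∑ j ∈ Finset.Icc 1 r, Real.sqrt (Aj j) * Real.sqrt (Dj j)) ^ 2) from
      (Real.sqrt_sq hTnn).symm]
    exact Real.sqrt_le_sqrt hT2
  -- final algebra
  set sA := Real.sqrt A with hsA
  set sD := Real.sqrt (∑ j ∈ Finset.Icc 1 r, Dj j) with hsD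
  have hsAnn : 0 ≤ sA := Real.sqrt_nonneg _
  have hsDnn : 0 ≤ sD := Real.sqrt_nonneg _
  have hsA2 : sA ^ 2 = A := Real.sq_sqrt hAnn
  have hsD2 : sD ^ 2 = ∑ j ∈ Finset.Icc 1 r, Dj j := Real.sq_sqrt hDnn
  have hsDle : sD ≤ δ * ν * sA := by
    have h1 : (∑ j ∈ Finset.Icc 1 r, Dj j) ≤ (δ * ν) ^ 2 * A := hDfin
    have h2 : sD ≤ Real.sqrt ((δ * ν) ^ 2 * A) := Real.sqrt_le_sqrt h1
    rwa [Real.sqrt_mul (sq_nonneg _), Real.sqrt_sq (by positivity : 0 ≤ δ * ν), ← hsA] at h2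
  have hIT : |∑ j ∈ Finset.Icc 1 r, Ij j| ≤ sA * sD := le_trans hIabs hT
  have hIlo : -(sA * sD) ≤ ∑ j ∈ Finset.Icc 1 r, Ij j := by
    have := neg_abs_le (∑ j ∈ Finset.Icc 1 r, Ij j); linarith
  have hIhi : ∑ j ∈ Finset.Icc 1 r, Ij j ≤ sA * sD := le_trans (le_abs_self _) hIT
  have hfin := samp_final A (∑ j ∈ Finset.Icc 1 r, Ij j) (∑ j ∈ Finset.Icc 1 r, Dj j)
    sA sD (δ * ν) (by positivity) hδν hsA2 hsD2 hsAnn hsDnn hsDle hIlo hIhi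
  constructor
  · rw [hSsum, hAsum]; exact hfin.1
  · rw [hSsum, hAsum]; exact hfin.2

/-- Stability of sampling for cosine polynomials: with weights
`w_j = (x_{j+1} − x_{j−1})/2` and maximal gap `δ < 1/M`,
`(1−δM)²‖p‖₂² ≤ Σ_j |p(x_j)|² w_j ≤ (1+δM)²‖p‖₂²` for all cosine polynomials `p`
of degree at most `M`. -/
theorem sampling_inequality_cosine (M r : ℕ) (x w : ℕ → ℝ) (δ : ℝ) (hr : 1 ≤ r)
    (hmono : ∀ j, 1 ≤ j → j < r → x j < x (j + 1))
    (hx1 : x 1 = 0) (hxr : x r = 1)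
    (hx0 : x 0 = -x 1) (hxr1 : x (r + 1) = 2 - x r)
    (hw : ∀ j, 1 ≤ j → j ≤ r → w j = (x (j + 1) - x (j - 1)) / 2)
    (hδ : ∀ j ≤ r, x (j + 1) - x j ≤ δ)
    (hgap : δ < 1 / M)
    (c : ℕ → ℝ) (p : ℝ → ℝ)
    (hp : ∀ t : ℝ, p t = c 0 / Real.sqrt 2 +
      ∑ k ∈ Finset.Icc 1 M, c k * Real.cos (Real.pi * k * t)) :
    (1 - δ * M) ^ 2 * (∫ t in (0:ℝ)..1, (p t) ^ 2) ≤
        ∑ j ∈ Finset.Icc 1 r, (p (x j)) ^ 2 * w j ∧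
      ∑ j ∈ Finset.Icc 1 r, (p (x j)) ^ 2 * w j ≤
        (1 + δ * M) ^ 2 * ∫ t in (0:ℝ)..1, (p t) ^ 2 := by
  have hx0' : x 0 = 0 := by rw [hx0, hx1, neg_zero]
  have hδ0 : 0 ≤ δ := by
    have h := hδ 0 (Nat.zero_le r)
    rw [hx0', hx1] at h
    simpa using h
  have hM1 : 1 ≤ M := by
    by_contra hM
    have hM0 : M = 0 := by omega
    rw [hM0] at hgap
    norm_num at hgap
    linarith
  have hMpos : (0:ℝ) < M := by exact_mod_cast Nat.pos_of_ne_zero (by omega)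
  have hδM : δ * M < 1 := by
    rw [lt_div_iff₀ hMpos] at hgap
    linarith
  have hr2 : 2 ≤ r := by
    by_contra h
    have hr1 : r = 1 := by omega
    rw [hr1, hx1] at hxr
    norm_num at hxr
  have hxr1' : x (r + 1) = 1 := by rw [hxr1, hxr]; norm_num
  have hp' : p = fun t => c 0 / Real.sqrt 2 +
      ∑ k ∈ Finset.Icc 1 M, c k * Real.cos (π * k * t) := funext hp
  subst hp'
  have hQK : ∀ t : ℝ, |∑ k ∈ Finset.Icc 1 M, c k * (-Real.sin (π * k * t) * (π * k))|
      ≤ ∑ k ∈ Finset.Icc 1 M, |c k| * (π * k) := by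
    intro t
    refine (Finset.abs_sum_le_sum_abs _ _).trans (Finset.sum_le_sum ?_)
    intro k _
    rw [abs_mul]
    refine mul_le_mul_of_nonneg_left ?_ (abs_nonneg (c k))
    rw [abs_mul, abs_neg]
    have h1 : |Real.sin (π * k * t)| ≤ 1 :=
      abs_le.2 ⟨Real.neg_one_le_sin _, Real.sin_le_one _⟩
    have h2 : |π * (k:ℝ)| = π * k := abs_of_nonneg (by positivity)
    rw [h2]
    calc |Real.sin (π * k * t)| * (π * k) ≤ 1 * (π * k) :=
        mul_le_mul_of_nonneg_right h1 (by positivity)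
      _ = π * k := one_mul _
  have hB : (∫ t in (0:ℝ)..1, (∑ k ∈ Finset.Icc 1 M,
        c k * (-Real.sin (π * k * t) * (π * k))) ^ 2)
      ≤ (π * M) ^ 2 * ∫ t in (0:ℝ)..1,
        (c 0 / Real.sqrt 2 + ∑ k ∈ Finset.Icc 1 M, c k * Real.cos (π * k * t)) ^ 2 := by
    rw [samp_B M c, samp_A M c]
    have hterm : ∀ k ∈ Finset.Icc 1 M, (π * (k:ℝ) * c k) ^ 2 ≤ (π * (M:ℝ)) ^ 2 * (c k) ^ 2 := by
      intro k hk
      have hkM : (k:ℝ) ≤ M := Nat.cast_le.2 (Finset.mem_Icc.mp hk).2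
      have hk0 : (0:ℝ) ≤ k := Nat.cast_nonneg k
      have h2 : (k:ℝ) ^ 2 ≤ (M:ℝ) ^ 2 := by nlinarith
      calc (π * k * c k) ^ 2 = π ^ 2 * (c k) ^ 2 * (k:ℝ) ^ 2 := by ring
        _ ≤ π ^ 2 * (c k) ^ 2 * (M:ℝ) ^ 2 := mul_le_mul_of_nonneg_left h2 (by positivity)
        _ = (π * M) ^ 2 * (c k) ^ 2 := by ring
    have hsum := Finset.sum_le_sum hterm
    rw [← Finset.mul_sum] at hsum
    have hpos : (0:ℝ) ≤ (π * (M:ℝ)) ^ 2 * ((c 0) ^ 2 / 2) := by positivity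
    nlinarith [hsum, hpos]
  exact samp_main
    (fun t => c 0 / Real.sqrt 2 + ∑ k ∈ Finset.Icc 1 M, c k * Real.cos (π * k * t))
    (fun t => ∑ k ∈ Finset.Icc 1 M, c k * (-Real.sin (π * k * t) * (π * k)))
    (∑ k ∈ Finset.Icc 1 M, |c k| * (π * k)) M r x w δ
    (samp_deriv M c) (by fun_prop) hQK (Nat.cast_nonneg M) hδ0 hδM hB hr2 hmono
    hx1 hxr hx0' hxr1' hw hδ
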